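/- Let e₁, e₂ ∈ ℂ with e₁² ∉ {0,1}, e₂² ∉ {0,1}, e₁² ≠ e₂², and let β₀ ∈ ℂ with β₀² = (e₁−1)(e₂+1)/((e₁+1)(e₂−1)) and α₀ ∈ ℂ with α₀² = (e₁+1)(e₂+1)/((e₁−1)(e₂−1)), and let r ∈ ℂ with r² = e₁² − 1. If (s, t) ∈ ℂ² satisfies t² = (s²−1)(s²−e₁²)(s²−e₂²) and s ≠ 1, then the point (x, y) with x = (e₂+1)(s+1)/((e₂−1)(s−1)) and y = 4(e₂+1)²t/((e₂−1)³ r (s−1)³) satisfies y² = x(x−1)(x−α₀²)(x−β₀²)(x−α₀²β₀²). -/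

import Mathlib

set_option maxHeartbeats 4000000 in
theorem stmt_2 (e₁ e₂ α₀ β₀ r s t : ℂ)
    (he10 : e₁^2 ≠ 0) (he11 : e₁^2 ≠ 1) (he20 : e₂^2 ≠ 0) (he21 : e₂^2 ≠ 1)
    (he12 : e₁^2 ≠ e₂^2)
    (hβ : β₀^2 = (e₁ - 1) * (e₂ + 1) / ((e₁ + 1) * (e₂ - 1)))
    (hα : α₀^2 = (e₁ + 1) * (e₂ + 1) / ((e₁ - 1) * (e₂ - 1)))
    (hr : r^2 = e₁^2 - 1)
    (hH : t^2 = (s^2 - 1) * (s^2 - e₁^2) * (s^2 - e₂^2))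
    (hs : s ≠ 1) :
    (4 * (e₂ + 1)^2 * t / ((e₂ - 1)^3 * r * (s - 1)^3))^2 =
      ((e₂ + 1) * (s + 1) / ((e₂ - 1) * (s - 1))) *
      ((e₂ + 1) * (s + 1) / ((e₂ - 1) * (s - 1)) - 1) *
      ((e₂ + 1) * (s + 1) / ((e₂ - 1) * (s - 1)) - α₀^2) *
      ((e₂ + 1) * (s + 1) / ((e₂ - 1) * (s - 1)) - β₀^2) *
      ((e₂ + 1) * (s + 1) / ((e₂ - 1) * (s - 1)) - α₀^2 * β₀^2) := by
  have h1m : e₁ - 1 ≠ 0 := fun h => he11 (by rw [show e₁ = 1 by linear_combination h]; ring)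
  have h1p : e₁ + 1 ≠ 0 := fun h => he11 (by rw [show e₁ = -1 by linear_combination h]; ring)
  have h2m : e₂ - 1 ≠ 0 := fun h => he21 (by rw [show e₂ = 1 by linear_combination h]; ring)
  have h2p : e₂ + 1 ≠ 0 := fun h => he21 (by rw [show e₂ = -1 by linear_combination h]; ring)
  have hrne : r ≠ 0 := fun h => he11 (by linear_combination -hr + (r+1)*h - h)
  have hsm : s - 1 ≠ 0 := sub_ne_zero.mpr hs
  rw [hβ, hα]
  field_simp
  linear_combination 16*(e₁^2-1)*hH - 16*(s^2-1)*(s^2-e₁^2)*(s^2-e₂^2)*hr
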